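/- arXiv:1905.09617 — 5 statements merged into one kernel-verified Lean document; each statement's English description precedes it below -/
import Mathlib

section
/- A commutative ring A is von Neumann regular if and only if A is reduced and its prime spectrum Spec(A), equipped with the Zariski topology, is a Boolean space, i.e., a compact Hausdorff totally disconnected space. -/
/-- In a von Neumann regular ring, every basic open of the spectrum is clopen, via an
idempotent generating the same open set. -/
lemma vnr_exists_idem_clopen {A : Type*} [CommRing A]
    (h : ∀ a : A, ∃ x : A, a = a ^ 2 * x) (f : A) :
    ∃ e : A, IsClopen (PrimeSpectrum.basicOpen e : Set (PrimeSpectrum A)) ∧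
      ∀ p : PrimeSpectrum A, (f ∈ p.asIdeal ↔ e ∈ p.asIdeal) := by
  obtain ⟨x, hx⟩ := h f
  refine ⟨f * x, ?_, ?_⟩
  · have hidem : IsIdempotentElem (f * x) := by
      unfold IsIdempotentElem
      calc f * x * (f * x) = f ^ 2 * x * x := by ring
        _ = f * x := by rw [← hx]
    constructor
    · rw [PrimeSpectrum.basicOpen_eq_zeroLocus_of_isIdempotentElem _ hidem]
      exact PrimeSpectrum.isClosed_zeroLocus _
    · exact (PrimeSpectrum.basicOpen (f * x)).2
  · intro p
    constructor
    · intro hf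
      exact Ideal.mul_mem_right x _ hf
    · intro he
      have : f = f * (f * x) := by
        calc f = f ^ 2 * x := hx
          _ = f * (f * x) := by ring
      rw [this]
      exact Ideal.mul_mem_left _ _ he

/-- A commutative ring is von Neumann regular iff it is reduced and its prime spectrum
(with the Zariski topology) is a Boolean space (compact, Hausdorff, totally disconnected). -/
theorem vonNeumannRegular_iff_reduced_and_boolean_spectrum
    (A : Type*) [CommRing A] :
    (∀ a : A, ∃ x : A, a = a ^ 2 * x) ↔
      (IsReduced A ∧ CompactSpace (PrimeSpectrum A) ∧ T2Space (PrimeSpectrum A) ∧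
        TotallyDisconnectedSpace (PrimeSpectrum A)) := by
  constructor
  · intro h
    -- reduced
    have hred : IsReduced A := by
      constructor
      rintro y ⟨n, hn⟩
      obtain ⟨x, hx⟩ := h y
      have key : ∀ m : ℕ, y = y ^ (m + 1) * x ^ m := by
        intro m
        induction m with
        | zero => simp
        | succ m ih =>
          calc y = y ^ (m + 1) * x ^ m := ih
            _ = y ^ m * y * x ^ m := by ring
            _ = y ^ m * (y ^ 2 * x) * x ^ m := by rw [← hx]
            _ = y ^ (m + 1 + 1) * x ^ (m + 1) := by ring
      rcases Nat.eq_zero_or_pos n with rfl | hn1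
      · have h1 : (1 : A) = 0 := by simpa using hn
        calc y = y * 1 := (mul_one y).symm
          _ = y * 0 := by rw [h1]
          _ = 0 := mul_zero y
      · have := key (n - 1)
        rw [Nat.sub_add_cancel hn1] at this
        rw [this, hn, zero_mul]
    -- separation: for distinct points there's a clopen set containing one but not the other
    have sep : ∀ p q : PrimeSpectrum A, p ≠ q →
        ∃ U : Set (PrimeSpectrum A), IsClopen U ∧ p ∈ U ∧ q ∉ U := by
      intro p q hpq
      have hne : p.asIdeal ≠ q.asIdeal := fun hh => hpq (PrimeSpectrum.ext hh)
      have hex : (∃ f, f ∈ p.asIdeal ∧ f ∉ q.asIdeal) ∨ ∃ f, f ∈ q.asIdeal ∧ f ∉ p.asIdeal := by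
        by_contra hc
        push_neg at hc
        exact hne (Ideal.ext fun z => ⟨fun hz => hc.1 z hz, fun hz => hc.2 z hz⟩)
      rcases hex with ⟨f, hfp, hfq⟩ | ⟨f, hfq, hfp⟩
      · obtain ⟨e, hcl, hiff⟩ := vnr_exists_idem_clopen h f
        refine ⟨(PrimeSpectrum.basicOpen e : Set (PrimeSpectrum A))ᶜ, hcl.compl, ?_, ?_⟩
        · show p ∉ (PrimeSpectrum.basicOpen e : Set (PrimeSpectrum A))
          rw [SetLike.mem_coe, PrimeSpectrum.mem_basicOpen, not_not]
          exact (hiff p).mp hfp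
        · show ¬ q ∉ (PrimeSpectrum.basicOpen e : Set (PrimeSpectrum A))
          rw [SetLike.mem_coe, PrimeSpectrum.mem_basicOpen, not_not]
          exact fun he => hfq ((hiff q).mpr he)
      · obtain ⟨e, hcl, hiff⟩ := vnr_exists_idem_clopen h f
        refine ⟨(PrimeSpectrum.basicOpen e : Set (PrimeSpectrum A)), hcl, ?_, ?_⟩
        · rw [SetLike.mem_coe, PrimeSpectrum.mem_basicOpen]
          exact fun he => hfp ((hiff p).mpr he)
        · rw [SetLike.mem_coe, PrimeSpectrum.mem_basicOpen, not_not]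
          exact (hiff q).mp hfq
    have ht2 : T2Space (PrimeSpectrum A) := by
      constructor
      intro p q hpq
      obtain ⟨U, hU, hpU, hqU⟩ := sep p q hpq
      exact ⟨U, Uᶜ, hU.2, hU.compl.2, hpU, hqU, disjoint_compl_right⟩
    have hts : TotallySeparatedSpace (PrimeSpectrum A) := by
      constructor
      intro p _ q _ hpq
      obtain ⟨U, hU, hpU, hqU⟩ := sep p q hpq
      exact ⟨U, Uᶜ, hU.2, hU.compl.2, hpU, hqU, by simp, disjoint_compl_right⟩
    exact ⟨hred, inferInstance, ht2, inferInstance⟩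
  · rintro ⟨hred, _, ht2, _⟩
    -- every prime ideal is a minimal prime
    have hmin : ∀ p : PrimeSpectrum A, p.asIdeal ∈ minimalPrimes A := by
      intro p
      obtain ⟨q, hq, hle⟩ := Ideal.exists_minimalPrimes_le (bot_le : (⊥ : Ideal A) ≤ p.asIdeal)
      haveI hqprime : q.IsPrime := hq.1.1
      have hclosed : IsClosed ({(⟨q, hqprime⟩ : PrimeSpectrum A)} : Set (PrimeSpectrum A)) :=
        isClosed_singleton
      have hqmax : q.IsMaximal :=
        (PrimeSpectrum.isClosed_singleton_iff_isMaximal _).mp hclosed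
      have heq : q = p.asIdeal := hqmax.eq_of_le p.isPrime.ne_top hle
      rw [← heq]
      exact hq
    intro a
    set J : Ideal A := (Ideal.span {a ^ 2}).colon (Ideal.span {a}) with hJdef
    have hJtop : J = ⊤ := by
      by_contra hne
      obtain ⟨m, hmmax, hJm⟩ := Ideal.exists_le_maximal J hne
      haveI : m.IsPrime := hmmax.isPrime
      have hmem : a ∈ m := hJm (Ideal.mem_colon_span_singleton.mpr
        (by rw [← pow_two]; exact Ideal.mem_span_singleton_self _))
      have hminm : m ∈ minimalPrimes A := hmin ⟨m, hmmax.isPrime⟩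
      -- in the localization at m, a maps into the maximal ideal, hence is nilpotent
      have h1 : algebraMap A (Localization m.primeCompl) a ∈
          IsLocalRing.maximalIdeal (Localization m.primeCompl) :=
        (IsLocalization.AtPrime.to_map_mem_maximal_iff _ m a).mpr hmem
      have h2 : IsNilpotent (algebraMap A (Localization m.primeCompl) a) :=
        by
          have hr := IsLocalization.AtPrime.radical_map_of_mem_minimalPrimes
            (A := Localization m.primeCompl) m ⊥ hminm
          rw [Ideal.map_bot, IsLocalization.AtPrime.map_eq_maximalIdeal] at hr
          rw [← hr] at h1
          obtain ⟨n, hn⟩ := h1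
          exact ⟨n, Ideal.mem_bot.mp hn⟩
      obtain ⟨n, hn⟩ := h2
      rw [← map_pow] at hn
      obtain ⟨s, hs⟩ := (IsLocalization.map_eq_zero_iff m.primeCompl
        (Localization m.primeCompl) (a ^ n)).mp hn
      -- (s * a) is nilpotent in A, hence zero
      have hsa : ((s : A) * a) ^ (n + 1) = 0 := by
        have : ((s : A) * a) ^ (n + 1) = (s : A) ^ n * a * ((s : A) * a ^ n) := by ring
        rw [this, hs, mul_zero]
      have hsa0 : (s : A) * a = 0 := IsReduced.pow_eq_zero hsa
      have hsJ : (s : A) ∈ J := Ideal.mem_colon_span_singleton.mpr (by rw [hsa0]; exact Ideal.zero_mem _)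
      exact s.2 (hJm hsJ)
    have h1J : (1 : A) ∈ J := hJtop ▸ Submodule.mem_top
    have : a ∈ Ideal.span {a ^ 2} := by
      have := Ideal.mem_colon_span_singleton.mp h1J
      rwa [one_mul] at this
    obtain ⟨x, hx⟩ := Ideal.mem_span_singleton'.mp this
    exact ⟨x, by linear_combination -hx⟩
end

section
/- Let A be a von Neumann regular commutative ring and p a prime ideal of A. Then the quotient ring A ⧸ p is isomorphic as a ring to the localization of A at p. -/
/-- For a von Neumann regular commutative ring `A` and a prime ideal `p`,
the quotient `A ⧸ p` is ring-isomorphic to the localization of `A` at `p`. -/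
theorem vonNeumannRegular_quotient_iso_localization_atPrime
    (A : Type*) [CommRing A] (hA : ∀ a : A, ∃ x : A, a = a ^ 2 * x)
    (p : Ideal A) [p.IsPrime] :
    Nonempty ((A ⧸ p) ≃+* Localization.AtPrime p) := by
  have h : IsLocalization p.primeCompl (A ⧸ p) := by
    constructor
    constructor
    · rintro ⟨s, hs⟩
      obtain ⟨x, hx⟩ := hA s
      refine IsUnit.of_mul_eq_one (Ideal.Quotient.mk p x) ?_
      rw [Ideal.Quotient.algebraMap_eq, ← map_mul, ← sub_eq_zero, ← map_one (Ideal.Quotient.mk p), ← map_sub,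
        Ideal.Quotient.eq_zero_iff_mem]
      have h0 : s * (s * x - 1) ∈ p := by
        have : s * (s * x - 1) = s ^ 2 * x - s := by ring
        rw [this, ← hx, sub_self]; exact p.zero_mem
      rcases Ideal.IsPrime.mem_or_mem ‹p.IsPrime› h0 with h | h
      · exact absurd h hs
      · exact h
    · intro z
      obtain ⟨a, rfl⟩ := Ideal.Quotient.mk_surjective z
      exact ⟨⟨a, 1⟩, by simp⟩
    · intro a b hab
      have hd : a - b ∈ p := Ideal.Quotient.eq.mp hab
      obtain ⟨x, hx⟩ := hA (a - b)
      refine ⟨⟨1 - (a - b) * x, fun hc => ?_⟩, ?_⟩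
      · exact ‹p.IsPrime›.ne_top (p.eq_top_of_isUnit_mem
          (by simpa using p.add_mem hc (p.mul_mem_right x hd)) isUnit_one)
      · have h0 : (1 - (a - b) * x) * (a - b) = 0 := by
          have h1 : (1 - (a - b) * x) * (a - b) = (a - b) - (a - b) ^ 2 * x := by ring
          rw [h1, ← hx, sub_self]
        simpa using sub_eq_zero.mp (by linear_combination h0)
  exact ⟨(IsLocalization.algEquiv p.primeCompl (A ⧸ p) (Localization.AtPrime p)).toRingEquiv⟩
end

section
/- Let A and B be von Neumann regular commutative rings and let f, g : A → B be ring homomorphisms. Then the equalizer subring E = { a ∈ A : f(a) = g(a) }, with the ring structure inherited from A, is a von Neumann regular commutative ring. In particular, for every a ∈ E the unique b ∈ A satisfying a = a² * b and b = b² * a belongs to E. -/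
/-- Uniqueness of quasi-inverses in a commutative ring. -/
lemma quasiInverse_unique {R : Type*} [CommRing R] {a b c : R}
    (h1 : a = a ^ 2 * b) (h2 : b = b ^ 2 * a)
    (h3 : a = a ^ 2 * c) (h4 : c = c ^ 2 * a) : b = c := by
  have e1 : b = b * a * c := by linear_combination (1 - a * c) * h2 + b ^ 2 * h3
  have e2 : c = c * a * b := by linear_combination (1 - a * b) * h4 + c ^ 2 * h1
  linear_combination e1 - e2

/-- The equalizer of two ring homomorphisms between von Neumann regular commutative rings
is a von Neumann regular commutative ring; in particular the quasi-inverse of any element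
of the equalizer again belongs to the equalizer. -/
theorem vonNeumannRegular_eqLocus
    (A B : Type*) [CommRing A] [CommRing B]
    (hA : ∀ a : A, ∃ x : A, a = a ^ 2 * x) (hB : ∀ b : B, ∃ x : B, b = b ^ 2 * x)
    (f g : A →+* B) :
    (∀ a : f.eqLocus g, ∃ x : f.eqLocus g, a = a ^ 2 * x) ∧
      ∀ a b : A, a ∈ f.eqLocus g → (a = a ^ 2 * b ∧ b = b ^ 2 * a) → b ∈ f.eqLocus g := by
  have key : ∀ a b : A, a ∈ f.eqLocus g → (a = a ^ 2 * b ∧ b = b ^ 2 * a) → b ∈ f.eqLocus g := by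
    intro a b ha ⟨h1, h2⟩
    have hfa : f a = g a := ha
    have hf1 : f a = (f a) ^ 2 * f b := by
      simpa [map_mul, map_pow] using congrArg f h1
    have hf2 : f b = (f b) ^ 2 * f a := by
      simpa [map_mul, map_pow] using congrArg f h2
    have hg1 : f a = (f a) ^ 2 * g b := by
      rw [hfa]; simpa [map_mul, map_pow] using congrArg g h1
    have hg2 : g b = (g b) ^ 2 * f a := by
      rw [hfa]; simpa [map_mul, map_pow] using congrArg g h2
    exact quasiInverse_unique hf1 hf2 hg1 hg2
  refine ⟨?_, key⟩
  intro a
  obtain ⟨x, hx⟩ := hA (a : A)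
  set b : A := x ^ 2 * (a : A) with hb
  have h1 : (a : A) = (a : A) ^ 2 * b := by
    rw [hb]; linear_combination (1 + (a : A) * x) * hx
  have h2 : b = b ^ 2 * (a : A) := by
    rw [hb]; linear_combination (x ^ 2 + (a : A) * x ^ 3) * hx
  refine ⟨⟨b, key a b a.2 ⟨h1, h2⟩⟩, ?_⟩
  ext
  push_cast
  exact h1
end

section
/- For every commutative ring A there exist a von Neumann regular commutative ring V and a ring homomorphism ν : A → V with the following universal property: for every von Neumann regular commutative ring B and every ring homomorphism f : A → B there exists a unique ring homomorphism g : V → B with g ∘ ν = f. (V together with ν is the von Neumann regular hull of A.) -/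
universe u v

set_option synthInstance.maxHeartbeats 1000000
set_option maxHeartbeats 1000000

namespace VNRHull

/-- Terms over `A`: ring operations plus a formal quasi-inverse. -/
inductive Pre (A : Type u) : Type u
  | of : A → Pre A
  | add : Pre A → Pre A → Pre A
  | mul : Pre A → Pre A → Pre A
  | neg : Pre A → Pre A
  | inv : Pre A → Pre A

open FreeCommRing

variable (A : Type u) [CommRing A]

/-- Relations defining the von Neumann regular hull. -/
def rels : Set (FreeCommRing (Pre A)) :=
  { r | (∃ a b : A, r = of (.of (a + b)) - (of (.of a) + of (.of b))) ∨
        (∃ a b : A, r = of (.of (a * b)) - of (.of a) * of (.of b)) ∨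
        (r = of (.of 1) - 1) ∨
        (∃ t s : Pre A, r = of (.add t s) - (of t + of s)) ∨
        (∃ t s : Pre A, r = of (.mul t s) - of t * of s) ∨
        (∃ t : Pre A, r = of (.neg t) + of t) ∨
        (∃ t : Pre A, r = of t - of t ^ 2 * of (.inv t)) ∨
        (∃ t : Pre A, r = of (.inv t) - of (.inv t) ^ 2 * of t) }

noncomputable def hullIdeal : Ideal (FreeCommRing (Pre A)) := Ideal.span (rels A)

abbrev Hull : Type u := FreeCommRing (Pre A) ⧸ hullIdeal A

noncomputable def mk : FreeCommRing (Pre A) →+* Hull A := Ideal.Quotient.mk _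

lemma mk_eq_zero_of_rel {r : FreeCommRing (Pre A)} (h : r ∈ rels A) : mk A r = 0 :=
  Ideal.Quotient.eq_zero_iff_mem.2 (Ideal.subset_span h)

lemma mk_eq_of_rel {r s : FreeCommRing (Pre A)} (h : r - s ∈ rels A) :
    mk A r = mk A s := by
  have := mk_eq_zero_of_rel A h
  rw [map_sub, sub_eq_zero] at this
  exact this

lemma mk_add_term (t s : Pre A) :
    mk A (of (.add t s)) = mk A (of t) + mk A (of s) := by
  have : mk A (of (.add t s)) = mk A (of t + of s) :=
    mk_eq_of_rel A (Or.inr (Or.inr (Or.inr (Or.inl ⟨t, s, rfl⟩))))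
  simpa using this

lemma mk_mul_term (t s : Pre A) :
    mk A (of (.mul t s)) = mk A (of t) * mk A (of s) := by
  have : mk A (of (.mul t s)) = mk A (of t * of s) :=
    mk_eq_of_rel A (Or.inr (Or.inr (Or.inr (Or.inr (Or.inl ⟨t, s, rfl⟩)))))
  simpa using this

lemma mk_neg_term (t : Pre A) :
    mk A (of (.neg t)) = - mk A (of t) := by
  have h0 : mk A (of (.neg t) + of t) = 0 :=
    mk_eq_zero_of_rel A (Or.inr (Or.inr (Or.inr (Or.inr (Or.inr (Or.inl ⟨t, rfl⟩))))))
  rw [map_add] at h0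
  exact eq_neg_of_add_eq_zero_left h0

lemma mk_of_add (a b : A) :
    mk A (of (.of (a + b))) = mk A (of (.of a)) + mk A (of (.of b)) := by
  have : mk A (of (.of (a + b))) = mk A (of (.of a) + of (.of b)) :=
    mk_eq_of_rel A (Or.inl ⟨a, b, rfl⟩)
  simpa using this

lemma mk_of_mul (a b : A) :
    mk A (of (.of (a * b))) = mk A (of (.of a)) * mk A (of (.of b)) := by
  have : mk A (of (.of (a * b))) = mk A (of (.of a) * of (.of b)) :=
    mk_eq_of_rel A (Or.inr (Or.inl ⟨a, b, rfl⟩))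
  simpa using this

lemma mk_of_one : mk A (of (.of 1)) = 1 := by
  have : mk A (of (.of 1)) = mk A 1 :=
    mk_eq_of_rel A (Or.inr (Or.inr (Or.inl (by simp))))
  simpa using this

lemma mk_quasi (t : Pre A) :
    mk A (of t) = mk A (of t) ^ 2 * mk A (of (.inv t)) := by
  have := mk_eq_zero_of_rel A
    (show of t - of t ^ 2 * of (.inv t) ∈ rels A from
      Or.inr (Or.inr (Or.inr (Or.inr (Or.inr (Or.inr (Or.inl ⟨t, rfl⟩)))))))
  rw [map_sub, sub_eq_zero] at this
  simpa using this

lemma mk_quasi' (t : Pre A) :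
    mk A (of (.inv t)) = mk A (of (.inv t)) ^ 2 * mk A (of t) := by
  have := mk_eq_zero_of_rel A
    (show of (.inv t) - of (.inv t) ^ 2 * of t ∈ rels A from
      Or.inr (Or.inr (Or.inr (Or.inr (Or.inr (Or.inr (Or.inr ⟨t, rfl⟩)))))))
  rw [map_sub, sub_eq_zero] at this
  simpa using this

/-- The structure map `A → Hull A`. -/
noncomputable def nu : A →+* Hull A where
  toFun a := mk A (of (.of a))
  map_one' := mk_of_one A
  map_mul' a b := mk_of_mul A a b
  map_zero' := by
    have h := mk_of_add A 0 0
    simpa using h.symm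
  map_add' a b := mk_of_add A a b

/-- Every element of the hull is the class of a single term. -/
lemma surj_term (v : Hull A) : ∃ t : Pre A, v = mk A (of t) := by
  obtain ⟨x, rfl⟩ := Ideal.Quotient.mk_surjective v
  show ∃ t, mk A x = mk A (of t)
  induction x using FreeCommRing.induction_on with
  | neg_one =>
      refine ⟨.neg (.of 1), ?_⟩
      rw [mk_neg_term, mk_of_one, map_neg, map_one]
  | of b => exact ⟨b, rfl⟩
  | add x y hx hy =>
      obtain ⟨t, ht⟩ := hx; obtain ⟨s, hs⟩ := hy
      exact ⟨.add t s, by rw [map_add, ht, hs, mk_add_term]⟩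
  | mul x y hx hy =>
      obtain ⟨t, ht⟩ := hx; obtain ⟨s, hs⟩ := hy
      exact ⟨.mul t s, by rw [map_mul, ht, hs, mk_mul_term]⟩

/-- Strong quasi-inverses are unique. -/
lemma strong_qi_unique {B : Type v} [CommRing B] {a x y : B}
    (hx1 : a = a ^ 2 * x) (hx2 : x = x ^ 2 * a)
    (hy1 : a = a ^ 2 * y) (hy2 : y = y ^ 2 * a) : x = y := by
  linear_combination hx2 - hy2 + (x ^ 2 + x * y) * hy1 - (y ^ 2 + x * y) * hx1

section Lift

variable {B : Type v} [CommRing B] (hB : ∀ b : B, ∃ x : B, b = b ^ 2 * x)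

/-- A chosen strong quasi-inverse in a von Neumann regular ring. -/
noncomputable def qi (b : B) : B := (hB b).choose ^ 2 * b

lemma qi_spec1 (b : B) : b = b ^ 2 * qi hB b := by
  have h := (hB b).choose_spec
  unfold qi
  linear_combination (1 + b * (hB b).choose) * h

lemma qi_spec2 (b : B) : qi hB b = (qi hB b) ^ 2 * b := by
  have h := (hB b).choose_spec
  unfold qi
  linear_combination ((hB b).choose ^ 2 + (hB b).choose ^ 3 * b) * h

variable (f : A →+* B)

noncomputable def evalPre : Pre A → B
  | .of a => f a
  | .add t s => evalPre t + evalPre s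
  | .mul t s => evalPre t * evalPre s
  | .neg t => - evalPre t
  | .inv t => qi hB (evalPre t)

noncomputable def liftFree : FreeCommRing (Pre A) →+* B :=
  FreeCommRing.lift (evalPre A hB f)

lemma liftFree_rel {r : FreeCommRing (Pre A)} (h : r ∈ rels A) :
    liftFree A hB f r = 0 := by
  obtain ⟨a, b, rfl⟩ | ⟨a, b, rfl⟩ | rfl | ⟨t, s, rfl⟩ | ⟨t, s, rfl⟩ |
    ⟨t, rfl⟩ | ⟨t, rfl⟩ | ⟨t, rfl⟩ := h
  all_goals
    simp only [liftFree, map_sub, map_add, map_mul, map_one, map_pow, map_neg,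
      FreeCommRing.lift_of, evalPre]
  · ring
  · ring
  · ring
  · ring
  · ring
  · ring
  · exact sub_eq_zero.2 (qi_spec1 hB _)
  · exact sub_eq_zero.2 (qi_spec2 hB _)

noncomputable def liftHom : Hull A →+* B :=
  Ideal.Quotient.lift (hullIdeal A) (liftFree A hB f) (by
    intro x hx
    refine (Ideal.span_le (I := RingHom.ker (liftFree A hB f))).2 ?_ hx
    intro r hr
    exact liftFree_rel A hB f hr)

lemma liftHom_mk (x : FreeCommRing (Pre A)) :
    liftHom A hB f (mk A x) = liftFree A hB f x :=
  Ideal.Quotient.lift_mk _ _ _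

lemma liftHom_comp : (liftHom A hB f).comp (nu A) = f := by
  ext a
  show liftHom A hB f (mk A (of (.of a))) = f a
  rw [liftHom_mk]
  simp [liftFree, evalPre]

lemma liftHom_unique (g : Hull A →+* B) (hg : g.comp (nu A) = f) :
    g = liftHom A hB f := by
  have key : ∀ t : Pre A, g (mk A (of t)) = liftHom A hB f (mk A (of t)) := by
    intro t
    induction t with
    | of a =>
        have h1 : g (mk A (of (.of a))) = f a := RingHom.congr_fun hg a
        rw [h1, liftHom_mk]
        simp [liftFree, evalPre]
    | add t s iht ihs => rw [mk_add_term, map_add, map_add, iht, ihs]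
    | mul t s iht ihs => rw [mk_mul_term, map_mul, map_mul, iht, ihs]
    | neg t iht => rw [mk_neg_term, map_neg, map_neg, iht]
    | inv t iht =>
        -- both images are strong quasi-inverses of the same element
        have hv : g (mk A (of t)) = liftHom A hB f (mk A (of t)) := iht
        have q1 := congrArg g (mk_quasi A t)
        have q2 := congrArg g (mk_quasi' A t)
        have q3 := congrArg (liftHom A hB f) (mk_quasi A t)
        have q4 := congrArg (liftHom A hB f) (mk_quasi' A t)
        simp only [map_mul, map_pow] at q1 q2 q3 q4
        rw [hv] at q1 q2
        exact strong_qi_unique q1 q2 q3 q4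
  refine RingHom.ext fun v => ?_
  obtain ⟨t, rfl⟩ := surj_term A v
  exact key t

end Lift

end VNRHull

/-- Every commutative ring has a von Neumann regular hull: a von Neumann regular ring `V`
and a homomorphism `ν : A → V` through which every homomorphism from `A` to a
von Neumann regular ring factors uniquely. -/
theorem exists_vonNeumannRegular_hull (A : Type u) [CommRing A] :
    ∃ (V : Type u) (_ : CommRing V) (ν : A →+* V),
      (∀ v : V, ∃ x : V, v = v ^ 2 * x) ∧
      ∀ (B : Type v) (_ : CommRing B), (∀ b : B, ∃ x : B, b = b ^ 2 * x) →
        ∀ f : A →+* B, ∃! g : V →+* B, g.comp ν = f := by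
  refine ⟨VNRHull.Hull A, inferInstance, VNRHull.nu A, ?_, ?_⟩
  · intro v
    obtain ⟨t, rfl⟩ := VNRHull.surj_term A v
    exact ⟨VNRHull.mk A (FreeCommRing.of (.inv t)), VNRHull.mk_quasi A t⟩
  · intro B _ hB f
    exact ⟨VNRHull.liftHom A hB f, VNRHull.liftHom_comp A hB f,
      fun g hg => VNRHull.liftHom_unique A hB f g hg⟩
end

section
/- For every Boolean space X there exists a von Neumann regular commutative ring R such that the prime spectrum Spec(R), equipped with the Zariski topology, is homeomorphic to X. -/
universe u

open TopologicalSpace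

lemma zmod2_mul_self (a : ZMod 2) : a * a = a := by revert a; decide

lemma zmod2_ne_zero_iff (a : ZMod 2) : a ≠ 0 ↔ a = 1 := by revert a; decide

section Aux

variable (X : Type u) [TopologicalSpace X]

/-- The evaluation map from `X` to the prime spectrum of locally constant
`ZMod 2`-valued functions. -/
noncomputable def stoneMap (x : X) : PrimeSpectrum (LocallyConstant X (ZMod 2)) :=
  ⟨RingHom.ker (LocallyConstant.evalRingHom (Y := ZMod 2) x), RingHom.ker_isPrime _⟩

variable {X}

lemma mem_stoneMap_iff (x : X) (f : LocallyConstant X (ZMod 2)) :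
    f ∈ (stoneMap X x).asIdeal ↔ f x = 0 := Iff.rfl

lemma stoneMap_continuous : Continuous (stoneMap X) := by
  rw [PrimeSpectrum.isTopologicalBasis_basic_opens.continuous_iff]
  rintro _ ⟨f, rfl⟩
  have : stoneMap X ⁻¹' (PrimeSpectrum.basicOpen f : Set (PrimeSpectrum _)) =
      {x : X | f x = 1} := by
    ext x
    simp only [Set.mem_preimage, SetLike.mem_coe, PrimeSpectrum.mem_basicOpen, Set.mem_setOf_eq]
    rw [show ((f : LocallyConstant X (ZMod 2)) ∉ (stoneMap X x).asIdeal ↔ f x ≠ 0) from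
      (mem_stoneMap_iff x f).not, zmod2_ne_zero_iff]
  rw [this]
  exact f.isLocallyConstant.isOpen_fiber 1

lemma stoneMap_injective [T2Space X] [CompactSpace X] [TotallyDisconnectedSpace X] :
    Function.Injective (stoneMap X) := by
  intro x y hxy
  by_contra hne
  obtain ⟨U, hU, hxU, hyU⟩ := exists_isClopen_of_totally_separated hne
  have hfx : LocallyConstant.charFn (ZMod 2) hU x = 1 :=
    (LocallyConstant.charFn_eq_one (ZMod 2) x hU).2 hxU
  have hfy : LocallyConstant.charFn (ZMod 2) hU y = 0 :=
    (LocallyConstant.charFn_eq_zero (ZMod 2) y hU).2 hyU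
  have : LocallyConstant.charFn (ZMod 2) hU ∈ (stoneMap X y).asIdeal := hfy
  rw [← hxy, mem_stoneMap_iff, hfx] at this
  exact one_ne_zero this

lemma stoneMap_surjective [CompactSpace X] :
    Function.Surjective (stoneMap X) := by
  intro p
  -- First find a common zero of all elements of `p`.
  have hzero : ∃ x : X, ∀ f ∈ p.asIdeal, f x = 0 := by
    by_contra h
    push_neg at h
    -- the supports of elements of `p` cover `X`
    have hcover : Set.univ ⊆ ⋃ f : p.asIdeal, {x : X | (f : LocallyConstant X (ZMod 2)) x = 1} := by
      intro x _
      obtain ⟨f, hf, hfx⟩ := h x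
      exact Set.mem_iUnion.2 ⟨⟨f, hf⟩, (zmod2_ne_zero_iff _).1 hfx⟩
    obtain ⟨t, ht⟩ := isCompact_univ.elim_finite_subcover
      (fun f : p.asIdeal => {x : X | (f : LocallyConstant X (ZMod 2)) x = 1})
      (fun f => (f : LocallyConstant X (ZMod 2)).isLocallyConstant.isOpen_fiber 1) hcover
    -- the product of `1 - f` over the finite subcover is zero
    have hprod : (∏ f ∈ t, (1 - (f : LocallyConstant X (ZMod 2)))) = 0 := by
      ext x
      obtain ⟨f, hft, hfx⟩ := Set.mem_iUnion₂.1 (ht (Set.mem_univ x))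
      have : ((∏ f ∈ t, (1 - (f : LocallyConstant X (ZMod 2)))) : LocallyConstant X (ZMod 2)) x =
          ∏ f ∈ t, (1 - (f : LocallyConstant X (ZMod 2)) x) := by
        show (LocallyConstant.evalRingHom (Y := ZMod 2) x)
            (∏ f ∈ t, (1 - (f : LocallyConstant X (ZMod 2)))) = _
        rw [map_prod]
        simp [LocallyConstant.evalRingHom]
      rw [this]
      refine (Finset.prod_eq_zero hft ?_).trans rfl
      rw [hfx]; ring
    have h0 : (∏ f ∈ t, (1 - (f : LocallyConstant X (ZMod 2)))) ∈ p.asIdeal := by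
      rw [hprod]; exact Ideal.zero_mem _
    obtain ⟨f, _, hf⟩ := (Ideal.IsPrime.prod_mem_iff (hp := p.isPrime)).1 h0
    have : (1 : LocallyConstant X (ZMod 2)) ∈ p.asIdeal := by
      have := Ideal.add_mem p.asIdeal hf f.2
      simpa using this
    exact p.isPrime.ne_top (Ideal.eq_top_of_isUnit_mem _ this isUnit_one)
  obtain ⟨x, hx⟩ := hzero
  refine ⟨x, ?_⟩
  ext f
  rw [mem_stoneMap_iff]
  constructor
  · -- f x = 0 → f ∈ p
    intro hfx
    have hmul : f * (1 - f) = 0 := by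
      have : f * f = f := by
        ext y
        exact zmod2_mul_self (f y)
      rw [mul_sub, mul_one, this, sub_self]
    have : f * (1 - f) ∈ p.asIdeal := by rw [hmul]; exact Ideal.zero_mem _
    rcases p.isPrime.mem_or_mem this with h | h
    · exact h
    · exfalso
      have := hx _ h
      simp only [LocallyConstant.sub_apply, LocallyConstant.coe_one, Pi.one_apply, hfx,
        sub_zero] at this
      exact one_ne_zero this
  · exact fun hf => hx f hf

lemma stoneMap_image_basicOpen [T2Space X] [CompactSpace X] [TotallyDisconnectedSpace X]
    {U : Set X} (hU : IsClopen U) :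
    stoneMap X '' U =
      (PrimeSpectrum.basicOpen (LocallyConstant.charFn (ZMod 2) hU) :
        Set (PrimeSpectrum (LocallyConstant X (ZMod 2)))) := by
  ext p
  obtain ⟨x, rfl⟩ := stoneMap_surjective p
  simp only [Set.mem_image, SetLike.mem_coe, PrimeSpectrum.mem_basicOpen]
  rw [show (LocallyConstant.charFn (ZMod 2) hU ∉ (stoneMap X x).asIdeal ↔
      LocallyConstant.charFn (ZMod 2) hU x ≠ 0) from (mem_stoneMap_iff x _).not,
    zmod2_ne_zero_iff, LocallyConstant.charFn_eq_one]
  constructor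
  · rintro ⟨y, hyU, hyx⟩
    rwa [← stoneMap_injective hyx]
  · exact fun hx => ⟨x, hx, rfl⟩

end Aux

/-- Every Boolean space (compact Hausdorff totally disconnected space) is homeomorphic to
the prime spectrum of some von Neumann regular commutative ring. -/
theorem booleanSpace_homeomorph_primeSpectrum_vonNeumannRegular
    (X : Type u) [TopologicalSpace X] [CompactSpace X] [T2Space X]
    [TotallyDisconnectedSpace X] :
    ∃ (R : Type u) (_ : CommRing R), (∀ a : R, ∃ x : R, a = a ^ 2 * x) ∧
      Nonempty (PrimeSpectrum R ≃ₜ X) := by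
  refine ⟨LocallyConstant X (ZMod 2), inferInstance, ?_, ?_⟩
  · intro a
    refine ⟨1, ?_⟩
    have : a * a = a := by
      ext x
      exact zmod2_mul_self (a x)
    rw [mul_one, sq, this]
  · -- the homeomorphism
    have hbij : Function.Bijective (stoneMap X) :=
      ⟨stoneMap_injective, stoneMap_surjective⟩
    let e : X ≃ PrimeSpectrum (LocallyConstant X (ZMod 2)) := Equiv.ofBijective _ hbij
    have hinv : Continuous e.symm := by
      rw [isTopologicalBasis_isClopen.continuous_iff]
      intro U hU
      have : e.symm ⁻¹' U = stoneMap X '' U := by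
        ext p
        obtain ⟨x, rfl⟩ := stoneMap_surjective p
        simp only [Set.mem_preimage]
        rw [show e.symm (stoneMap X x) = x from e.symm_apply_apply x]
        constructor
        · exact fun h => ⟨x, h, rfl⟩
        · rintro ⟨y, hy, hyx⟩
          rwa [← stoneMap_injective hyx]
      rw [this, stoneMap_image_basicOpen hU]
      exact (PrimeSpectrum.basicOpen _).isOpen
    exact ⟨(Homeomorph.mk e stoneMap_continuous hinv).symm⟩
end
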